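/- For all positive integers n and d, the set of polynomials { ⟨α, x⟩^d : α ∈ B(n,d) } spans the space ℍ_d[x] of real homogeneous polynomials of degree d in n variables, and since it has cardinality C(n+d-1, d) = dim ℍ_d[x], it is a basis of ℍ_d[x]. -/

import Mathlib

open MvPolynomial

private lemma eqC {σ : Type*} {p : MvPolynomial σ ℝ} (h : p.totalDegree = 0) :
    p = C (coeff 0 p) := by
  ext m
  rcases eq_or_ne m 0 with rfl | hm
  · simp
  · classical
    rw [coeff_C, if_neg (Ne.symm hm)]
    by_contra hc
    have hms : m ∈ p.support := mem_support_iff.mpr hc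
    have h2 := (totalDegree_eq_zero_iff σ p).mp h m hms
    exact hm (Finsupp.ext fun x => h2 x)

private lemma vanishAux : ∀ (d m : ℕ) (p : MvPolynomial (Fin m) ℝ) (c : Fin m → ℕ),
    p.totalDegree ≤ d →
    (∀ b : Fin m → ℕ, (∑ i, b i) ≤ d → eval (fun i => ((c i + b i : ℕ) : ℝ)) p = 0) →
    p = 0 := by
  intro d
  induction d with
  | zero =>
    intro m p c hdeg hev
    have hp : p = C (coeff 0 p) := eqC (Nat.le_zero.mp hdeg)
    have h0 := hev 0 (by simp)
    rw [hp] at h0 ⊢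
    rw [eval_C] at h0
    rw [h0, map_zero]
  | succ d ihd =>
    intro m
    induction m with
    | zero =>
      intro p c hdeg hev
      have hp : p = C (coeff 0 p) := by
        apply eqC
        rw [totalDegree_eq_zero_iff]
        intro m _ x
        exact x.elim0
      have h0 := hev 0 (by simp)
      rw [hp] at h0 ⊢
      rw [eval_C] at h0
      rw [h0, map_zero]
    | succ m ihm =>
      intro p c hdeg hev
      set c0 : ℝ := ((c 0 : ℕ) : ℝ) with hc0
      set P : Polynomial (MvPolynomial (Fin m) ℝ) := finSuccEquiv ℝ m p with hPdef
      have hrev : ∀ y : Fin m → ℝ,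
          eval y (Polynomial.eval (C c0) P) = eval (Fin.cons c0 y) p := by
        intro y
        rw [eval_eq_eval_mv_eval', Polynomial.eval_map]
        have h := Polynomial.eval₂_at_apply (p := P)
          (eval y : MvPolynomial (Fin m) ℝ →+* ℝ) (C c0)
        rw [eval_C] at h
        exact h.symm
      -- degree bound for the restriction
      have hrdeg : (Polynomial.eval (C c0) P).totalDegree ≤ d + 1 := by
        rw [Polynomial.eval_eq_sum, Polynomial.sum_def]
        refine (totalDegree_finset_sum _ _).trans (Finset.sup_le fun k hk => ?_)
        refine (totalDegree_mul _ _).trans ?_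
        have h1 : (P.coeff k).totalDegree ≤ d + 1 := by
          have h3 := totalDegree_coeff_finSuccEquiv_add_le p k
            (Polynomial.mem_support_iff.mp hk)
          rw [← hPdef] at h3
          omega
        have h2 : ((C c0 : MvPolynomial (Fin m) ℝ) ^ k).totalDegree = 0 := by
          rw [← map_pow, totalDegree_C]
        rw [h2]
        omega
      -- the restriction vanishes
      have hr0 : Polynomial.eval (C c0) P = 0 := by
        apply ihm (Polynomial.eval (C c0) P) (fun i => c i.succ) hrdeg
        intro b hb
        rw [hrev]
        have h := hev (Fin.cons 0 b) (by rw [Fin.sum_cons]; simpa using hb)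
        have hpt : (Fin.cons c0 (fun i => ((c i.succ + b i : ℕ) : ℝ)) : Fin (m+1) → ℝ)
            = fun j => ((c j + (Fin.cons 0 b : Fin (m+1) → ℕ) j : ℕ) : ℝ) := by
          funext j
          refine Fin.cases ?_ (fun i => ?_) j
          · simp [hc0]
          · simp [Fin.cons_succ]
        rw [hpt]
        exact h
      -- factor out (X 0 - C c0)
      obtain ⟨Q, hQ⟩ := (Polynomial.dvd_iff_isRoot.mpr hr0 :
        (Polynomial.X - Polynomial.C (C c0)) ∣ P)
      set q : MvPolynomial (Fin (m + 1)) ℝ := (finSuccEquiv ℝ m).symm Q with hqdef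
      have hpq : p = (X 0 - C c0) * q := by
        apply (finSuccEquiv ℝ m).injective
        rw [map_mul, map_sub, finSuccEquiv_X_zero, hqdef, AlgEquiv.apply_symm_apply]
        have hC : finSuccEquiv ℝ m (C c0) = Polynomial.C (C c0) := by
          simp [finSuccEquiv_apply]
        rw [hC, ← hQ]
      by_cases hq0 : q = 0
      · rw [hpq, hq0, mul_zero]
      -- degree bound on q
      have hqdeg : q.totalDegree ≤ d := by
        by_contra hlt
        push_neg at hlt
        obtain ⟨s, hs, hsd⟩ := Finset.exists_mem_eq_sup q.support
          (support_nonempty.mpr hq0) (fun s => s.sum fun _ e => e)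
        have hsd' : q.totalDegree = s.sum fun _ e => e := by
          rw [totalDegree]; exact hsd
        have hsum : ((Finsupp.single (0 : Fin (m+1)) 1 + s).sum fun _ e => e)
            = 1 + q.totalDegree := by
          rw [Finsupp.sum_add_index' (fun _ => rfl) (fun _ _ _ => rfl),
            Finsupp.sum_single_index rfl, hsd']
        have hzq : coeff (Finsupp.single 0 1 + s) q = 0 := by
          apply coeff_eq_zero_of_totalDegree_lt
          show q.totalDegree < (Finsupp.single (0 : Fin (m+1)) 1 + s).sum fun _ e => e
          rw [hsum]
          omega
        have hco : coeff (Finsupp.single 0 1 + s) p = coeff s q := by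
          rw [hpq, sub_mul, coeff_sub, coeff_X_mul, coeff_C_mul, hzq, mul_zero, sub_zero]
        have hmem : (Finsupp.single (0 : Fin (m+1)) 1 + s) ∈ p.support := by
          rw [mem_support_iff, hco]
          exact mem_support_iff.mp hs
        have hle := le_totalDegree hmem
        rw [hsum] at hle
        omega
      -- q vanishes on the shifted lattice
      have hq : q = 0 := by
        apply ihd (m + 1) q (Function.update c 0 (c 0 + 1)) hqdeg
        intro b hb
        have hb' : (∑ i, Function.update b 0 (b 0 + 1) i) ≤ d + 1 := by
          rw [Finset.sum_update_of_mem (Finset.mem_univ _),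
            Finset.sdiff_singleton_eq_erase]
          have : (∑ i, b i) = b 0 + ∑ i ∈ Finset.univ.erase 0, b i :=
            (Finset.add_sum_erase _ _ (Finset.mem_univ _)).symm
          omega
        have h := hev (Function.update b 0 (b 0 + 1)) hb'
        rw [hpq] at h
        have hpt : (fun i => ((c i + Function.update b 0 (b 0 + 1) i : ℕ) : ℝ))
            = fun i => ((Function.update c 0 (c 0 + 1) i + b i : ℕ) : ℝ) := by
          funext j
          rcases eq_or_ne j 0 with rfl | hj
          · simp; ring_nf
          · simp [Function.update_of_ne hj]
        rw [hpt] at h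
        rw [eval_mul, eval_sub, eval_X, eval_C] at h
        have hne : ((Function.update c 0 (c 0 + 1) 0 + b 0 : ℕ) : ℝ) - c0 ≠ 0 := by
          simp [hc0]
          push_cast
          ring_nf
          positivity
        rcases mul_eq_zero.mp h with h' | h'
        · exact absurd h' hne
        · exact h'
      rw [hpq, hq, mul_zero]

private lemma tdAeval {n m : ℕ} (f : Fin n → MvPolynomial (Fin m) ℝ)
    (hf : ∀ i, (f i).totalDegree ≤ 1) (q : MvPolynomial (Fin n) ℝ) :
    (aeval f q).totalDegree ≤ q.totalDegree := by
  conv_lhs => rw [q.as_sum, map_sum]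
  refine (totalDegree_finset_sum _ _).trans (Finset.sup_le fun s hs => ?_)
  rw [aeval_monomial]
  refine (totalDegree_mul _ _).trans ?_
  have h1 : (algebraMap ℝ (MvPolynomial (Fin m) ℝ) (coeff s q)).totalDegree = 0 :=
    totalDegree_C _
  have h2 : (s.prod fun i k => f i ^ k).totalDegree ≤ s.sum fun _ e => e := by
    rw [Finsupp.prod]
    refine (totalDegree_finset_prod _ _).trans ?_
    refine le_trans (Finset.sum_le_sum fun i _ => ?_) (le_of_eq rfl)
    calc (f i ^ s i).totalDegree ≤ s i * (f i).totalDegree := totalDegree_pow _ _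
      _ ≤ s i * 1 := Nat.mul_le_mul_left _ (hf i)
      _ = s i := mul_one _
  rw [h1, zero_add]
  exact h2.trans (le_totalDegree hs)

private lemma homogEvalSmul {n : ℕ} {q : MvPolynomial (Fin n) ℝ} {d : ℕ}
    (hq : q.IsHomogeneous d) (t : ℝ) (z : Fin n → ℝ) :
    eval (fun i => t * z i) q = t ^ d * eval z q := by
  conv_lhs => rw [q.as_sum, map_sum]
  conv_rhs => rw [q.as_sum, map_sum, Finset.mul_sum]
  refine Finset.sum_congr rfl fun s hs => ?_
  rw [eval_monomial, eval_monomial]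
  have hdeg : s.degree = d := by
    by_contra h
    exact (mem_support_iff.mp hs) (hq.coeff_eq_zero h)
  rw [Finsupp.prod, Finsupp.prod]
  simp_rw [mul_pow]
  rw [Finset.prod_mul_distrib, Finset.prod_pow_eq_pow_sum]
  have : (∑ i ∈ s.support, s i) = d := hdeg
  rw [this]
  ring
private lemma homogVanish {n d : ℕ} (hn : 0 < n) (hd : 0 < d)
    (q : MvPolynomial (Fin n) ℝ) (hq : q.IsHomogeneous d)
    (hv : ∀ a : Fin n → ℕ, (∑ i, a i) = d → eval (fun i => (a i : ℝ)) q = 0) :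
    q = 0 := by
  obtain ⟨m, rfl⟩ : ∃ m, n = m + 1 := ⟨n - 1, by omega⟩
  set f : Fin (m + 1) → MvPolynomial (Fin m) ℝ :=
    Fin.cons (C (d : ℝ) - ∑ i, X i) X with hf
  have hfdeg : ∀ i, (f i).totalDegree ≤ 1 := by
    intro i
    refine Fin.cases ?_ (fun j => ?_) i
    · simp only [hf, Fin.cons_zero]
      rw [sub_eq_add_neg]
      refine (totalDegree_add _ _).trans (max_le ?_ ?_)
      · rw [totalDegree_C]; omega
      · rw [totalDegree_neg]
        refine (totalDegree_finset_sum _ _).trans (Finset.sup_le fun i _ => ?_)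
        rw [totalDegree_X]
    · simp only [hf, Fin.cons_succ]
      rw [totalDegree_X]
  have key : ∀ (y : Fin m → ℝ) (r : MvPolynomial (Fin (m + 1)) ℝ),
      eval y (aeval f r) = eval (fun i => eval y (f i)) r := by
    intro y r
    rw [aeval_def, eval_eval₂]
    have hcomp : ((eval y).comp (algebraMap ℝ (MvPolynomial (Fin m) ℝ))) = RingHom.id ℝ := by
      ext x
      simp [MvPolynomial.algebraMap_eq]
    rw [hcomp, eval₂_id]
  have hp : aeval f q = 0 := by
    apply vanishAux d m (aeval f q) 0 ((tdAeval f hfdeg q).trans hq.totalDegree_le)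
    intro b hb
    rw [key]
    simp only [Pi.zero_apply]
    have hfun : (fun i => eval (fun j => ((0 + b j : ℕ) : ℝ)) (f i))
        = fun i => (((Fin.cons (d - ∑ j, b j) b : Fin (m+1) → ℕ) i : ℕ) : ℝ) := by
      funext i
      refine Fin.cases ?_ (fun j => ?_) i
      · simp only [hf, Fin.cons_zero, map_sub, eval_C, map_sum, eval_X]
        push_cast [Nat.cast_sub hb]
        ring
      · simp [hf, Fin.cons_succ]
    rw [hfun]
    apply hv
    rw [Fin.sum_cons]
    omega
  have hzero : ∀ w : Fin (m + 1) → ℝ, (∑ i, w i) = (d : ℝ) → eval w q = 0 := by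
    intro w hw
    have h1 := key (Fin.tail w) q
    rw [hp, map_zero] at h1
    have hfun : (fun i => eval (Fin.tail w) (f i)) = w := by
      funext i
      refine Fin.cases ?_ (fun j => ?_) i
      · simp only [hf, Fin.cons_zero, map_sub, eval_C, map_sum, eval_X]
        rw [Fin.sum_univ_succ] at hw
        have : (∑ j, Fin.tail w j) = ∑ j : Fin m, w j.succ := rfl
        rw [this]
        linarith
      · simp [hf, Fin.cons_succ, Fin.tail]
    rw [hfun] at h1
    exact h1.symm
  have hall : ∀ z : Fin (m + 1) → ℝ,
      eval z (q * (∑ i, X i)) = eval z 0 := by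
    intro z
    rw [map_mul, map_zero]
    rcases eq_or_ne (∑ i, z i) 0 with h0 | h0
    · have hx : eval z (∑ i : Fin (m+1), X i) = 0 := by
        rw [map_sum]
        simpa using h0
      rw [hx, mul_zero]
    · have hq0 : eval z q = 0 := by
        set t : ℝ := (d : ℝ) / (∑ i, z i) with ht
        have hsum : (∑ i, t * z i) = (d : ℝ) := by
          rw [← Finset.mul_sum, ht]
          field_simp
        have hw := hzero (fun i => t * z i) hsum
        rw [homogEvalSmul hq t z] at hw
        have htne : t ≠ 0 := div_ne_zero (Nat.cast_ne_zero.mpr hd.ne') h0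
        exact (mul_eq_zero.mp hw).resolve_left (pow_ne_zero _ htne)
      rw [hq0, zero_mul]
  have hmul : q * (∑ i : Fin (m+1), X i) = 0 := MvPolynomial.funext hall
  have hs : (∑ i : Fin (m + 1), X i : MvPolynomial (Fin (m + 1)) ℝ) ≠ 0 := by
    intro hcon
    have h1 : eval (fun _ => (1 : ℝ)) (∑ i : Fin (m+1), X i) = 0 := by
      rw [hcon, map_zero]
    rw [map_sum] at h1
    simp at h1
    linarith [Nat.cast_nonneg (α := ℝ) m]
  exact (mul_eq_zero.mp hmul).resolve_right hs

private lemma prodXpow {n : ℕ} (u : Fin n → ℕ) :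
    (∏ i, (X i : MvPolynomial (Fin n) ℝ) ^ u i)
      = monomial (Finsupp.equivFunOnFinite.symm u) 1 := by
  rw [← prod_X_pow_eq_monomial]
  refine (Finset.prod_subset (Finset.subset_univ _) ?_).symm.trans
    (Finset.prod_congr rfl fun x _ => by rw [Finsupp.equivFunOnFinite_symm_apply_apply])
  intro x _ hx
  have h0 : u x = 0 := by
    by_contra h
    exact hx (Finsupp.mem_support_iff.mpr (by
      rwa [Finsupp.equivFunOnFinite_symm_apply_apply]))
  rw [h0, pow_zero]

private lemma coeffPow {n : ℕ} (α k : Fin n → ℕ) (dd : ℕ) (hk : ∑ i, k i = dd) :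
    coeff (Finsupp.equivFunOnFinite.symm k) ((∑ i, C ((α i : ℝ)) * X i) ^ dd)
      = (Nat.multinomial Finset.univ k : ℝ) * ∏ i, (α i : ℝ) ^ k i := by
  classical
  have hprod : ∀ u : Fin n → ℕ, (∏ i, ((C ((α i : ℝ)) * X i) ^ u i))
      = C (∏ i, (α i : ℝ) ^ u i) * monomial (Finsupp.equivFunOnFinite.symm u) 1 := by
    intro u
    simp_rw [mul_pow]
    rw [Finset.prod_mul_distrib, prodXpow, map_prod]
    simp_rw [map_pow]
  have hcast : ∀ m : ℕ, ((m : ℕ) : MvPolynomial (Fin n) ℝ) = C ((m : ℕ) : ℝ) :=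
    fun m => (map_natCast (C : ℝ →+* MvPolynomial (Fin n) ℝ) m).symm
  rw [Finset.sum_pow_eq_sum_piAntidiag, coeff_sum]
  rw [Finset.sum_eq_single_of_mem k
    (by rw [Finset.mem_piAntidiag]; exact ⟨hk, fun i _ => Finset.mem_univ i⟩)]
  · rw [hprod, hcast, coeff_C_mul, coeff_C_mul, coeff_monomial, if_pos rfl]
    ring
  · intro u hu hne
    rw [hprod, hcast, coeff_C_mul, coeff_C_mul, coeff_monomial, if_neg, mul_zero, mul_zero]
    intro h
    exact hne (Finsupp.equivFunOnFinite.symm.injective h)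

private lemma evalMonF {n : ℕ} (u : Fin n → ℕ) (cc : ℝ) (x : Fin n → ℝ) :
    eval x (monomial (Finsupp.equivFunOnFinite.symm u) cc) = cc * ∏ i, x i ^ u i := by
  rw [eval_monomial]
  congr 1
  rw [Finsupp.prod]
  have h1 : ∀ i, (Finsupp.equivFunOnFinite.symm u) i = u i :=
    fun i => Finsupp.equivFunOnFinite_symm_apply_apply u i
  rw [Finset.prod_congr rfl fun i _ => by rw [h1 i]]
  refine Finset.prod_subset (Finset.subset_univ _) fun i _ hi => ?_
  have h0 : u i = 0 := by
    by_contra h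
    exact hi (Finsupp.mem_support_iff.mpr (by rwa [h1 i]))
  rw [h0, pow_zero]

theorem stmt7 (n d : ℕ) (hn : 0 < n) (hd : 0 < d) :
    Submodule.span ℝ
        ((fun α : Fin n → ℕ => (∑ i, C ((α i : ℝ)) * X i) ^ d) ''
          (Finset.Nat.antidiagonalTuple n d : Set (Fin n → ℕ)))
      = homogeneousSubmodule (Fin n) ℝ d
    ∧ LinearIndependent ℝ
        (fun α : {a // a ∈ Finset.Nat.antidiagonalTuple n d} =>
          (∑ i, C (((α : Fin n → ℕ) i : ℝ)) * X i) ^ d) := by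
  classical
  set Bt := Finset.Nat.antidiagonalTuple n d with hBtdef
  set M : Matrix {a // a ∈ Bt} {a // a ∈ Bt} ℝ :=
    fun α β => ∏ i, ((α : Fin n → ℕ) i : ℝ) ^ ((β : Fin n → ℕ) i) with hMdef
  -- key: kernel of M (as mulVec) is trivial
  have key1 : ∀ c : {a // a ∈ Bt} → ℝ, M.mulVec c = 0 → c = 0 := by
    intro c hc
    set q : MvPolynomial (Fin n) ℝ :=
      ∑ β : {a // a ∈ Bt},
        monomial (Finsupp.equivFunOnFinite.symm ((β : Fin n → ℕ))) (c β) with hqd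
    have hqh : q.IsHomogeneous d := by
      refine IsHomogeneous.sum _ _ _ fun β _ => isHomogeneous_monomial _ ?_
      have hs : (∑ i, (β : Fin n → ℕ) i) = d := Finset.Nat.mem_antidiagonalTuple.mp β.2
      have h2 : (Finsupp.equivFunOnFinite.symm ((β : Fin n → ℕ))).degree
          = ∑ i, (β : Fin n → ℕ) i := by
        refine (Finset.sum_subset (Finset.subset_univ _) fun x _ hx => ?_).trans ?_
        · exact Finsupp.notMem_support_iff.mp hx
        · exact Finset.sum_congr rfl fun i _ => by
            rw [Finsupp.equivFunOnFinite_symm_apply_apply]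
      rw [h2, hs]
    have hqz : q = 0 := by
      apply homogVanish hn hd q hqh
      intro a ha
      have haB : a ∈ Bt := Finset.Nat.mem_antidiagonalTuple.mpr ha
      have hmv := congrFun hc ⟨a, haB⟩
      simp only [Matrix.mulVec, dotProduct, hMdef, Pi.zero_apply] at hmv
      rw [hqd, map_sum]
      rw [Finset.sum_congr rfl fun βb _ => evalMonF (βb.val) (c βb) _]
      rw [← hmv]
      exact Finset.sum_congr rfl fun β _ => mul_comm _ _
    funext β
    have h0 := congrArg (coeff (Finsupp.equivFunOnFinite.symm ((β : Fin n → ℕ)))) hqz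
    rw [coeff_zero, hqd, coeff_sum] at h0
    rw [Pi.zero_apply, ← h0]
    rw [Finset.sum_eq_single_of_mem β (Finset.mem_univ β)]
    · rw [coeff_monomial, if_pos rfl]
    · intro b _ hbne
      rw [coeff_monomial, if_neg]
      intro hcon
      exact hbne (Subtype.ext (Finsupp.equivFunOnFinite.symm.injective hcon))
  have hMu : IsUnit M := by
    rw [← Matrix.mulVec_injective_iff_isUnit]
    intro x y hxy
    have h := key1 (x - y) (by rw [Matrix.mulVec_sub, hxy, sub_self])
    exact sub_eq_zero.mp h
  -- linear independence
  have hind : LinearIndependent ℝ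
      (fun α : {a // a ∈ Bt} => (∑ i, C (((α : Fin n → ℕ) i : ℝ)) * X i) ^ d) := by
    rw [Fintype.linearIndependent_iff]
    intro g hg
    have hvm : Matrix.vecMul g M = 0 := by
      funext β
      have hkd : (∑ i, (β : Fin n → ℕ) i) = d := Finset.Nat.mem_antidiagonalTuple.mp β.2
      have h0 := congrArg (coeff (Finsupp.equivFunOnFinite.symm ((β : Fin n → ℕ)))) hg
      rw [coeff_zero, coeff_sum] at h0
      have hterm : ∀ α : {a // a ∈ Bt},
          coeff (Finsupp.equivFunOnFinite.symm ((β : Fin n → ℕ)))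
            (g α • (∑ i, C (((α : Fin n → ℕ) i : ℝ)) * X i) ^ d)
          = g α * ((Nat.multinomial Finset.univ ((β : Fin n → ℕ)) : ℝ) * M α β) := by
        intro α
        rw [coeff_smul, coeffPow _ _ d hkd, smul_eq_mul, hMdef]
      rw [Finset.sum_congr rfl fun α _ => hterm α] at h0
      have h1 : (∑ α : {a // a ∈ Bt},
            g α * ((Nat.multinomial Finset.univ ((β : Fin n → ℕ)) : ℝ) * M α β))
          = (Nat.multinomial Finset.univ ((β : Fin n → ℕ)) : ℝ)
            * ∑ α : {a // a ∈ Bt}, g α * M α β := by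
        rw [Finset.mul_sum]
        exact Finset.sum_congr rfl fun α _ => by ring
      rw [h1] at h0
      have hmne : ((Nat.multinomial Finset.univ ((β : Fin n → ℕ)) : ℝ)) ≠ 0 := by
        exact_mod_cast (Nat.multinomial_pos _ _).ne'
      have h2 := (mul_eq_zero.mp h0).resolve_left hmne
      rw [Pi.zero_apply]
      simpa [Matrix.vecMul, dotProduct] using h2
    have hinj := Matrix.vecMul_injective_iff_isUnit.mpr hMu
    have hg0 : g = 0 := by
      apply hinj
      show Matrix.vecMul g M = Matrix.vecMul 0 M
      rw [hvm, Matrix.zero_vecMul]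
    exact fun i => congrFun hg0 i
  -- each generator is homogeneous
  have hL : ∀ α : Fin n → ℕ, ((∑ i, C ((α i : ℝ)) * X i) ^ d).IsHomogeneous d := by
    intro α
    have h1 : (∑ i, C ((α i : ℝ)) * X i).IsHomogeneous 1 :=
      IsHomogeneous.sum _ _ _ fun i _ => isHomogeneous_C_mul_X _ _
    simpa using h1.pow d
  have hle : Submodule.span ℝ
      ((fun α : Fin n → ℕ => (∑ i, C ((α i : ℝ)) * X i) ^ d) '' (Bt : Set (Fin n → ℕ)))
      ≤ homogeneousSubmodule (Fin n) ℝ d := by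
    rw [Submodule.span_le]
    rintro _ ⟨α, _, rfl⟩
    rw [SetLike.mem_coe, mem_homogeneousSubmodule]
    exact hL α
  set gfam : {a // a ∈ Bt} → MvPolynomial (Fin n) ℝ :=
    fun β => monomial (Finsupp.equivFunOnFinite.symm ((β : Fin n → ℕ))) (1 : ℝ) with hgfam
  have hVle : homogeneousSubmodule (Fin n) ℝ d ≤ Submodule.span ℝ (Set.range gfam) := by
    intro p hp
    rw [mem_homogeneousSubmodule] at hp
    rw [show p = ∑ s ∈ p.support, monomial s (coeff s p) from p.as_sum]
    apply Submodule.sum_mem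
    intro s hs
    have hdegs : s.degree = d := by
      by_contra h
      exact mem_support_iff.mp hs (hp.coeff_eq_zero h)
    have hsum : (∑ i, s i) = d := by
      rw [← hdegs]
      exact (Finset.sum_subset (Finset.subset_univ _)
        (fun x _ hx => Finsupp.notMem_support_iff.mp hx)).symm
    have hmem : (s : Fin n → ℕ) ∈ Bt := Finset.Nat.mem_antidiagonalTuple.mpr hsum
    have heq : monomial s (coeff s p) = coeff s p • gfam ⟨(s : Fin n → ℕ), hmem⟩ := by
      rw [hgfam]
      show monomial s (coeff s p)
        = coeff s p • monomial (Finsupp.equivFunOnFinite.symm ((s : Fin n → ℕ))) 1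
      rw [Finsupp.equivFunOnFinite_symm_coe, smul_monomial, smul_eq_mul, mul_one]
    rw [heq]
    exact Submodule.smul_mem _ _ (Submodule.subset_span ⟨_, rfl⟩)
  haveI hfd1 : FiniteDimensional ℝ (Submodule.span ℝ (Set.range gfam)) :=
    FiniteDimensional.span_of_finite ℝ (Set.finite_range gfam)
  haveI hfd2 : FiniteDimensional ℝ (homogeneousSubmodule (Fin n) ℝ d) :=
    Submodule.finiteDimensional_of_le hVle
  have hcardle : Module.finrank ℝ (homogeneousSubmodule (Fin n) ℝ d)
      ≤ Fintype.card {a // a ∈ Bt} := by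
    refine (Submodule.finrank_mono hVle).trans ?_
    refine (finrank_span_le_card _).trans ?_
    rw [Set.toFinset_card]
    exact Fintype.card_range_le gfam
  have himg : ((fun α : Fin n → ℕ => (∑ i, C ((α i : ℝ)) * X i) ^ d) '' (Bt : Set (Fin n → ℕ)))
      = Set.range (fun α : {a // a ∈ Bt} =>
          (∑ i, C (((α : Fin n → ℕ) i : ℝ)) * X i) ^ d) := by
    exact Set.image_eq_range _ _
  have hfr : Module.finrank ℝ (Submodule.span ℝ
      ((fun α : Fin n → ℕ => (∑ i, C ((α i : ℝ)) * X i) ^ d) '' (Bt : Set (Fin n → ℕ))))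
      = Fintype.card {a // a ∈ Bt} := by
    rw [himg]
    exact finrank_span_eq_card hind
  have hspan := Submodule.eq_of_le_of_finrank_le hle (by rw [hfr]; exact hcardle)
  exact ⟨hspan, hind⟩
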